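/- Let m ≥ 1, N = 2^m, and let n ∈ {0, …, 2^m − 1} be an unknown threshold; a query at index i is flagged if and only if i > n. Consider the binary search that maintains a lower bound lo (initialized to 0) and, for t = 0, 1, …, m − 1, queries q_t = lo + 2^{m−1−t}, updating lo := q_t exactly when the query is not flagged. Then: (i) the search makes exactly m queries and terminates with lo = n; (ii) the number of flagged queries equals m minus the number of ones in the m-bit binary representation of n (i.e., the number of zero bits of n); and (iii) if n is uniformly distributed on {0, …, 2^m − 1}, the expected number of flagged queries is exactly m/2. -/

import Mathlib

/-- The lower bound `lo` maintained by the binary search for a threshold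
`n ∈ {0,…,2^m − 1}` after `t` steps: `lo` starts at `0` and, at step
`t = 0,1,…,m−1`, the search queries `q_t = lo + 2^(m−1−t)`; the query is flagged
iff `q_t > n`, and `lo` is updated to `q_t` exactly when the query is not flagged. -/
def bsLo (m n : ℕ) : ℕ → ℕ
  | 0 => 0
  | t + 1 =>
    let q := bsLo m n t + 2 ^ (m - 1 - t)
    if n < q then bsLo m n t else q   -- flagged iff `q > n`; update `lo` iff not flagged

/-- The list of the `m` queries made by the binary search. -/
def bsQueries (m n : ℕ) : List ℕ :=
  (List.range m).map fun t => bsLo m n t + 2 ^ (m - 1 - t)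

/-- The number of flagged queries made by the binary search. -/
def bsFlagged (m n : ℕ) : ℕ :=
  ((Finset.range m).filter fun t => n < bsLo m n t + 2 ^ (m - 1 - t)).card

lemma bsLo_eq (m n : ℕ) (hn : n < 2 ^ m) :
    ∀ t, t ≤ m → bsLo m n t = 2 ^ (m - t) * (n / 2 ^ (m - t)) := by
  intro t
  induction t with
  | zero => intro _; simp [bsLo, Nat.div_eq_of_lt hn]
  | succ t ih =>
    intro ht
    have htm : t < m := ht
    set k := m - 1 - t with hk
    have hmt : m - t = k + 1 := by omega
    have hmt1 : m - (t + 1) = k := by omega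
    rw [bsLo]
    simp only [ih (le_of_lt htm), hmt, hmt1, ← hk]
    have hdd : n / 2 ^ (k + 1) = n / 2 ^ k / 2 := by
      rw [Nat.div_div_eq_div_mul, pow_succ]
    set e := n / 2 ^ k with he
    have hpos : 0 < 2 ^ k := Nat.pow_pos (by norm_num)
    have hn1 : 2 ^ k * e ≤ n := by
      rw [he, mul_comm]; exact Nat.div_mul_le_self n (2 ^ k)
    have hn2 : n < 2 ^ k * e + 2 ^ k := by
      have hmod := Nat.div_add_mod n (2 ^ k)
      have hlt : n % 2 ^ k < 2 ^ k := Nat.mod_lt n hpos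
      rw [he]; omega
    have hmul : 2 ^ (k + 1) * (e / 2) = 2 ^ k * (2 * (e / 2)) := by ring
    have hem : 2 * (e / 2) + e % 2 = e := Nat.div_add_mod e 2
    rw [hdd, hmul]
    rcases Nat.mod_two_eq_zero_or_one e with h | h
    · have h2 : 2 * (e / 2) = e := by omega
      rw [h2, if_pos (by omega)]
    · have hqe : 2 ^ k * (2 * (e / 2)) + 2 ^ k = 2 ^ k * (2 * (e / 2) + 1) := by ring
      have h2 : 2 * (e / 2) + 1 = e := by omega
      rw [h2] at hqe
      rw [if_neg (by rw [hqe]; omega)]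
      exact hqe

lemma bs_flag_iff (m n : ℕ) (hn : n < 2 ^ m) (t : ℕ) (ht : t < m) :
    (n < bsLo m n t + 2 ^ (m - 1 - t)) ↔ n.testBit (m - 1 - t) = false := by
  set k := m - 1 - t with hk
  have hmt : m - t = k + 1 := by omega
  rw [bsLo_eq m n hn t (le_of_lt ht), hmt]
  have hdd : n / 2 ^ (k + 1) = n / 2 ^ k / 2 := by
    rw [Nat.div_div_eq_div_mul, pow_succ]
  set e := n / 2 ^ k with he
  have hpos : 0 < 2 ^ k := Nat.pow_pos (by norm_num)
  have hn1 : 2 ^ k * e ≤ n := by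
    rw [he, mul_comm]; exact Nat.div_mul_le_self n (2 ^ k)
  have hn2 : n < 2 ^ k * e + 2 ^ k := by
    have hmod := Nat.div_add_mod n (2 ^ k)
    have hlt : n % 2 ^ k < 2 ^ k := Nat.mod_lt n hpos
    rw [he]; omega
  have hmul : 2 ^ (k + 1) * (e / 2) = 2 ^ k * (2 * (e / 2)) := by ring
  have hem : 2 * (e / 2) + e % 2 = e := Nat.div_add_mod e 2
  rw [hdd, hmul, Nat.testBit_eq_decide_div_mod_eq, ← he]
  rcases Nat.mod_two_eq_zero_or_one e with h | h
  · have h2 : 2 * (e / 2) = e := by omega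
    rw [h2]
    simpa [h] using hn2
  · have hqe : 2 ^ k * (2 * (e / 2)) + 2 ^ k = 2 ^ k * (2 * (e / 2) + 1) := by ring
    have h2 : 2 * (e / 2) + 1 = e := by omega
    rw [h2] at hqe
    rw [hqe]
    simp [h]
    omega

lemma card_testBit_false (m t : ℕ) (ht : t < m) :
    ((Finset.range (2 ^ m)).filter fun n => n.testBit t = false).card = 2 ^ (m - 1) := by
  set A := (Finset.range (2 ^ m)).filter fun n => n.testBit t = false with hA
  set B := (Finset.range (2 ^ m)).filter fun n => ¬ (n.testBit t = false) with hB
  have hsum : A.card + B.card = 2 ^ m :=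
    (Finset.card_filter_add_card_filter_not _).trans (Finset.card_range _)
  have ht2 : (2 : ℕ) ^ t < 2 ^ m := Nat.pow_lt_pow_right (by norm_num) ht
  have hbij : A.card = B.card := by
    refine Finset.card_bij' (fun n _ => n ^^^ 2 ^ t) (fun n _ => n ^^^ 2 ^ t) ?_ ?_ ?_ ?_
    · intro a ha
      simp only [hA, Finset.mem_filter, Finset.mem_range] at ha
      simp only [hB, Finset.mem_filter, Finset.mem_range]
      refine ⟨Nat.xor_lt_two_pow ha.1 ht2, ?_⟩
      simp [Nat.testBit_xor, ha.2, Nat.testBit_two_pow_self]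
    · intro a ha
      simp only [hB, Finset.mem_filter, Finset.mem_range] at ha
      simp only [hA, Finset.mem_filter, Finset.mem_range]
      have h2 := ha.2
      refine ⟨Nat.xor_lt_two_pow ha.1 ht2, ?_⟩
      simp only [Bool.not_eq_false] at h2
      simp [Nat.testBit_xor, h2, Nat.testBit_two_pow_self]
    · intro a _; simp [Nat.xor_assoc]
    · intro a _; simp [Nat.xor_assoc]
  have h2m : 2 ^ m = 2 * 2 ^ (m - 1) := by
    rw [← pow_succ']; congr 1; omega
  omega

/-- For `N = 2^m` (`m ≥ 1`) and an unknown threshold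
`n ∈ {0,…,2^m − 1}`: (i) the binary search makes exactly `m` queries and terminates
with `lo = n`; (ii) its number of flagged queries equals the number of zero bits in
the `m`-bit binary representation of `n`, i.e. `m` minus the number of one bits; and
(iii) if `n` is uniform on `{0,…,2^m − 1}`, the expected number of flagged queries
is exactly `m/2`. -/
theorem binarySearch_flagged (m : ℕ) (hm : 1 ≤ m) :
    (∀ n < 2 ^ m, (bsQueries m n).length = m ∧ bsLo m n m = n) ∧
    (∀ n < 2 ^ m,
      bsFlagged m n = ((Finset.range m).filter fun t => n.testBit t = false).card ∧
      bsFlagged m n = m - ((Finset.range m).filter fun t => n.testBit t = true).card) ∧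
    (∑ n ∈ Finset.range (2 ^ m), (bsFlagged m n : ℝ)) / (2 ^ m : ℝ) = (m : ℝ) / 2 := by
  have hflag : ∀ n < 2 ^ m,
      bsFlagged m n = ((Finset.range m).filter fun t => n.testBit t = false).card := by
    intro n hn
    unfold bsFlagged
    have hfilter : ((Finset.range m).filter fun t => n < bsLo m n t + 2 ^ (m - 1 - t)) =
        (Finset.range m).filter fun t => n.testBit (m - 1 - t) = false := by
      apply Finset.filter_congr
      intro t ht
      simp only [Finset.mem_range] at ht
      simp [bs_flag_iff m n hn t ht]
    rw [hfilter]
    refine Finset.card_bij' (fun t _ => m - 1 - t) (fun t _ => m - 1 - t) ?_ ?_ ?_ ?_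
    · intro t ht
      simp only [Finset.mem_filter, Finset.mem_range] at ht ⊢
      exact ⟨by omega, ht.2⟩
    · intro t ht
      simp only [Finset.mem_filter, Finset.mem_range] at ht ⊢
      refine ⟨by omega, ?_⟩
      have heq : m - 1 - (m - 1 - t) = t := by omega
      rw [heq]; exact ht.2
    · intro t ht
      simp only [Finset.mem_filter, Finset.mem_range] at ht
      show m - 1 - (m - 1 - t) = t
      omega
    · intro t ht
      simp only [Finset.mem_filter, Finset.mem_range] at ht
      show m - 1 - (m - 1 - t) = t
      omega
  refine ⟨?_, ?_, ?_⟩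
  · intro n hn
    refine ⟨by simp [bsQueries], ?_⟩
    have := bsLo_eq m n hn m le_rfl
    simpa using this
  · intro n hn
    refine ⟨hflag n hn, ?_⟩
    rw [hflag n hn]
    have hpart : ((Finset.range m).filter fun t => n.testBit t = false).card +
        ((Finset.range m).filter fun t => ¬ (n.testBit t = false)).card = m :=
      (Finset.card_filter_add_card_filter_not _).trans (Finset.card_range _)
    have heq : ((Finset.range m).filter fun t => ¬ (n.testBit t = false)) =
        (Finset.range m).filter fun t => n.testBit t = true := by
      apply Finset.filter_congr; intro t _; simp
    rw [heq] at hpart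
    omega
  · have hsum : ∑ n ∈ Finset.range (2 ^ m), bsFlagged m n = m * 2 ^ (m - 1) := by
      have h1 : ∀ n ∈ Finset.range (2 ^ m),
          bsFlagged m n = ((Finset.range m).filter fun t => n.testBit t = false).card := by
        intro n hn; exact hflag n (Finset.mem_range.mp hn)
      rw [Finset.sum_congr rfl h1]
      have hcf : ∀ n : ℕ, ((Finset.range m).filter fun t => n.testBit t = false).card =
          ∑ t ∈ Finset.range m, if n.testBit t = false then 1 else 0 := by
        intro n; rw [Finset.card_filter]
      simp_rw [hcf]
      rw [Finset.sum_comm]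
      have h2 : ∀ t ∈ Finset.range m,
          (∑ n ∈ Finset.range (2 ^ m), if n.testBit t = false then 1 else 0) = 2 ^ (m - 1) := by
        intro t ht
        rw [← Finset.card_filter]
        exact card_testBit_false m t (Finset.mem_range.mp ht)
      rw [Finset.sum_congr rfl h2, Finset.sum_const, Finset.card_range, smul_eq_mul]
    have hR : (∑ n ∈ Finset.range (2 ^ m), (bsFlagged m n : ℝ)) = (m : ℝ) * 2 ^ (m - 1) := by
      rw [← Nat.cast_sum, hsum]; push_cast; ring
    rw [hR]
    have h2m : (2 : ℝ) ^ m = 2 ^ (m - 1) * 2 := by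
      rw [← pow_succ]; congr 1; omega
    rw [h2m]
    have hp : (2 : ℝ) ^ (m - 1) ≠ 0 := by positivity
    field_simp
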